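/- arXiv:1012.1002 — 2 statements merged into one kernel-verified Lean document; each statement's English description precedes it below -/
import Mathlib

section
/- Let N = 3 and θ = (0, 2π/3, 4π/3) (the regular 3-gon). Then the Hessian of V at θ has every off-diagonal entry equal to 1/6 and every diagonal entry equal to −1/3, and its eigenvalues are 0, −1/2, −1/2; in particular the Hessian is negative semidefinite with one-dimensional kernel spanned by (1,1,1), so the 3-gon is a nondegenerate local maximum of V. -/
open Real Finset Matrix

/-- The limit potential of the (1+N)-vortex problem:
`V(θ) = -∑_{i<j} (cos(θᵢ-θⱼ) + (1/2)·log(2 - 2cos(θᵢ-θⱼ)))`. -/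
noncomputable def vortexPotential (N : ℕ) (θ : Fin N → ℝ) : ℝ :=
  - ∑ i : Fin N, ∑ j : Fin N,
      if i < j then
        Real.cos (θ i - θ j) + (1 / 2) * Real.log (2 - 2 * Real.cos (θ i - θ j))
      else 0

/-- The Hessian matrix of the potential `V` at `θ`. -/
noncomputable def vortexHessian (N : ℕ) (θ : Fin N → ℝ) : Matrix (Fin N) (Fin N) ℝ :=
  fun i j => iteratedFDeriv ℝ 2 (vortexPotential N) θ ![Pi.single i 1, Pi.single j 1]

noncomputable def hPair (t : ℝ) : ℝ := Real.cos t + (1 / 2) * Real.log (2 - 2 * Real.cos t)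
noncomputable def hPair' (t : ℝ) : ℝ := -Real.sin t + Real.sin t / (2 - 2 * Real.cos t)

noncomputable def projD (i j : Fin 3) : (Fin 3 → ℝ) →L[ℝ] ℝ :=
  (ContinuousLinearMap.proj i : (Fin 3 → ℝ) →L[ℝ] ℝ) -
  (ContinuousLinearMap.proj j : (Fin 3 → ℝ) →L[ℝ] ℝ)

@[simp] lemma projD_apply (i j : Fin 3) (x : Fin 3 → ℝ) : projD i j x = x i - x j := rfl

lemma sub_hasFDerivAt (i j : Fin 3) (x : Fin 3 → ℝ) :
    HasFDerivAt (fun y : Fin 3 → ℝ => y i - y j) (projD i j) x :=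
  ((ContinuousLinearMap.proj i : (Fin 3 → ℝ) →L[ℝ] ℝ).hasFDerivAt).sub
    ((ContinuousLinearMap.proj j : (Fin 3 → ℝ) →L[ℝ] ℝ).hasFDerivAt)

noncomputable def Lmap (x : Fin 3 → ℝ) : (Fin 3 → ℝ) →L[ℝ] ℝ :=
  -(hPair' (x 0 - x 1) • projD 0 1 + hPair' (x 0 - x 2) • projD 0 2 +
    hPair' (x 1 - x 2) • projD 1 2)

lemma deriv_aux (t : ℝ) : HasDerivAt (fun s => 2 - 2 * Real.cos s) (2 * Real.sin t) t := by
  simpa using ((Real.hasDerivAt_cos t).const_mul 2).const_sub 2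

lemma hPair_hasDeriv {t : ℝ} (ht : 2 - 2 * Real.cos t ≠ 0) :
    HasDerivAt hPair (hPair' t) t := by
  have h2 := (((deriv_aux t).log ht).const_mul (1 / 2 : ℝ))
  have h3 := (Real.hasDerivAt_cos t).add h2
  refine h3.congr_deriv ?_
  unfold hPair'
  field_simp

lemma hPair'_hasDeriv {t : ℝ} (ht : Real.cos t = -(1 / 2)) :
    HasDerivAt hPair' (1 / 6) t := by
  have hne : (2 - 2 * Real.cos t) ≠ 0 := by rw [ht]; norm_num
  have h2 := (Real.hasDerivAt_sin t).div (deriv_aux t) hne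
  have h3 := (Real.hasDerivAt_sin t).neg.add h2
  refine h3.congr_deriv ?_
  have hs : Real.sin t ^ 2 = 1 - Real.cos t ^ 2 := Real.sin_sq t
  rw [ht] at hs ⊢
  field_simp
  nlinarith [hs]

lemma V3_eq : vortexPotential 3 = fun x : Fin 3 → ℝ =>
    -(hPair (x 0 - x 1) + hPair (x 0 - x 2) + hPair (x 1 - x 2)) := by
  funext x
  have h01 : ((0 : Fin 3) < 1) := by decide
  have h02 : ((0 : Fin 3) < 2) := by decide
  have h12 : ((1 : Fin 3) < 2) := by decide
  have h00 : ¬((0 : Fin 3) < 0) := by decide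
  have h10 : ¬((1 : Fin 3) < 0) := by decide
  have h11 : ¬((1 : Fin 3) < 1) := by decide
  have h20 : ¬((2 : Fin 3) < 0) := by decide
  have h21 : ¬((2 : Fin 3) < 1) := by decide
  have h22 : ¬((2 : Fin 3) < 2) := by decide
  simp only [vortexPotential, hPair, Fin.sum_univ_three, if_pos h01, if_pos h02, if_pos h12,
    if_neg h00, if_neg h10, if_neg h11, if_neg h20, if_neg h21, if_neg h22]
  ring

lemma V3_hasFDerivAt {x : Fin 3 → ℝ} (h01 : 2 - 2 * Real.cos (x 0 - x 1) ≠ 0)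
    (h02 : 2 - 2 * Real.cos (x 0 - x 2) ≠ 0) (h12 : 2 - 2 * Real.cos (x 1 - x 2) ≠ 0) :
    HasFDerivAt (vortexPotential 3) (Lmap x) x := by
  rw [V3_eq]
  have key : ∀ i j : Fin 3, 2 - 2 * Real.cos (x i - x j) ≠ 0 →
      HasFDerivAt (fun y : Fin 3 → ℝ => hPair (y i - y j))
        (hPair' (x i - x j) • projD i j) x := fun i j hij =>
    (hPair_hasDeriv hij).comp_hasFDerivAt (f := fun y : Fin 3 → ℝ => y i - y j) x (sub_hasFDerivAt i j x)
  exact (((key 0 1 h01).add (key 0 2 h02)).add (key 1 2 h12)).neg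

lemma Lmap_hasFDerivAt {x : Fin 3 → ℝ} (h01 : Real.cos (x 0 - x 1) = -(1 / 2))
    (h02 : Real.cos (x 0 - x 2) = -(1 / 2)) (h12 : Real.cos (x 1 - x 2) = -(1 / 2)) :
    HasFDerivAt Lmap
      (-((((1 / 6 : ℝ) • projD 0 1).smulRight (projD 0 1)) +
        (((1 / 6 : ℝ) • projD 0 2).smulRight (projD 0 2)) +
        (((1 / 6 : ℝ) • projD 1 2).smulRight (projD 1 2)))) x := by
  have key : ∀ i j : Fin 3, Real.cos (x i - x j) = -(1 / 2) →
      HasFDerivAt (fun y : Fin 3 → ℝ => hPair' (y i - y j) • projD i j)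
        (((1 / 6 : ℝ) • projD i j).smulRight (projD i j)) x := fun i j hij =>
    ((hPair'_hasDeriv hij).comp_hasFDerivAt (f := fun y : Fin 3 → ℝ => y i - y j) x (sub_hasFDerivAt i j x)).smul_const (projD i j)
  exact (((key 0 1 h01).add (key 0 2 h02)).add (key 1 2 h12)).neg

lemma cos_two_pi_div_three : Real.cos (2 * π / 3) = -(1 / 2) := by
  rw [show (2 * π / 3 : ℝ) = π - π / 3 by ring, Real.cos_pi_sub, Real.cos_pi_div_three]

lemma cos_four_pi_div_three : Real.cos (4 * π / 3) = -(1 / 2) := by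
  rw [show (4 * π / 3 : ℝ) = π + π / 3 by ring, Real.cos_add, Real.cos_pi, Real.sin_pi,
    Real.cos_pi_div_three]
  ring

lemma hessian_eq :
    vortexHessian 3 ![0, 2 * π / 3, 4 * π / 3] =
      !![-1/3, 1/6, 1/6; 1/6, -1/3, 1/6; 1/6, 1/6, -1/3] := by
  set θ : Fin 3 → ℝ := ![0, 2 * π / 3, 4 * π / 3] with hθ
  have hθ0 : θ 0 = 0 := rfl
  have hθ1 : θ 1 = 2 * π / 3 := rfl
  have hθ2 : θ 2 = 4 * π / 3 := rfl
  have hc01 : Real.cos (θ 0 - θ 1) = -(1 / 2) := by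
    rw [hθ0, hθ1, zero_sub, Real.cos_neg, cos_two_pi_div_three]
  have hc02 : Real.cos (θ 0 - θ 2) = -(1 / 2) := by
    rw [hθ0, hθ2, zero_sub, Real.cos_neg, cos_four_pi_div_three]
  have hc12 : Real.cos (θ 1 - θ 2) = -(1 / 2) := by
    rw [show θ 1 - θ 2 = -(2 * π / 3) by rw [hθ1, hθ2]; ring, Real.cos_neg,
      cos_two_pi_div_three]
  have hU : IsOpen {x : Fin 3 → ℝ | 0 < 2 - 2 * Real.cos (x 0 - x 1) ∧
      0 < 2 - 2 * Real.cos (x 0 - x 2) ∧ 0 < 2 - 2 * Real.cos (x 1 - x 2)} := by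
    have hcont : ∀ i j : Fin 3,
        Continuous (fun x : Fin 3 → ℝ => 2 - 2 * Real.cos (x i - x j)) := fun i j =>
      continuous_const.sub (continuous_const.mul
        (Real.continuous_cos.comp ((continuous_apply i).sub (continuous_apply j))))
    exact ((isOpen_lt continuous_const (hcont 0 1)).inter
      ((isOpen_lt continuous_const (hcont 0 2)).inter
        (isOpen_lt continuous_const (hcont 1 2))))
  have hθU : θ ∈ {x : Fin 3 → ℝ | 0 < 2 - 2 * Real.cos (x 0 - x 1) ∧
      0 < 2 - 2 * Real.cos (x 0 - x 2) ∧ 0 < 2 - 2 * Real.cos (x 1 - x 2)} := by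
    refine ⟨?_, ?_, ?_⟩ <;> simp only [hc01, hc02, hc12] <;> norm_num
  have hev : (fun x => fderiv ℝ (vortexPotential 3) x) =ᶠ[nhds θ] Lmap := by
    filter_upwards [hU.mem_nhds hθU] with x hx
    exact (V3_hasFDerivAt hx.1.ne' hx.2.1.ne' hx.2.2.ne').fderiv
  have hfd : fderiv ℝ (fderiv ℝ (vortexPotential 3)) θ =
      -((((1 / 6 : ℝ) • projD 0 1).smulRight (projD 0 1)) +
        (((1 / 6 : ℝ) • projD 0 2).smulRight (projD 0 2)) +
        (((1 / 6 : ℝ) • projD 1 2).smulRight (projD 1 2))) := by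
    rw [hev.fderiv_eq]
    exact (Lmap_hasFDerivAt hc01 hc02 hc12).fderiv
  funext i j
  show iteratedFDeriv ℝ 2 (vortexPotential 3) θ ![Pi.single i 1, Pi.single j 1] = _
  rw [iteratedFDeriv_two_apply]
  simp only [Matrix.cons_val_zero, Matrix.cons_val_one, Matrix.head_cons]
  rw [hfd]
  fin_cases i <;> fin_cases j <;>
    simp [ContinuousLinearMap.smulRight_apply, Pi.single_apply,
      Matrix.cons_val_zero, Matrix.cons_val_one, Matrix.head_cons, Matrix.cons_val_succ,
      Matrix.vecHead, Matrix.vecTail] <;> norm_num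

/-- For `N = 3` and the regular 3-gon `θ = (0, 2π/3, 4π/3)`, the Hessian
of `V` at `θ` has all off-diagonal entries `1/6` and all diagonal entries `-1/3`; its
eigenvalues are `0, -1/2, -1/2` (`-1/2` with multiplicity two), and it is negative
semidefinite with one-dimensional kernel spanned by `(1,1,1)`, so the 3-gon is a
nondegenerate local maximum of `V`. -/
theorem three_gon_maximum :
    vortexHessian 3 ![0, 2 * π / 3, 4 * π / 3] =
      !![-1/3, 1/6, 1/6; 1/6, -1/3, 1/6; 1/6, 1/6, -1/3] ∧
    (∀ μ : ℝ, (∃ v : Fin 3 → ℝ, v ≠ 0 ∧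
        (vortexHessian 3 ![0, 2 * π / 3, 4 * π / 3]).mulVec v = μ • v) ↔
      (μ = 0 ∨ μ = -1/2)) ∧
    (∃ v w : Fin 3 → ℝ, LinearIndependent ℝ ![v, w] ∧
      (vortexHessian 3 ![0, 2 * π / 3, 4 * π / 3]).mulVec v = (-1/2 : ℝ) • v ∧
      (vortexHessian 3 ![0, 2 * π / 3, 4 * π / 3]).mulVec w = (-1/2 : ℝ) • w) ∧
    (-(vortexHessian 3 ![0, 2 * π / 3, 4 * π / 3])).PosSemidef ∧
    (∀ v : Fin 3 → ℝ, (vortexHessian 3 ![0, 2 * π / 3, 4 * π / 3]).mulVec v = 0 ↔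
      ∃ c : ℝ, v = c • ![1, 1, 1]) := by
  rw [hessian_eq]
  refine ⟨rfl, ?_, ?_, ?_, ?_⟩
  · intro μ
    constructor
    · rintro ⟨v, hv0, hv⟩
      have h0 := congrFun hv 0
      have h1 := congrFun hv 1
      have h2 := congrFun hv 2
      simp [Matrix.mulVec, dotProduct, Fin.sum_univ_three] at h0 h1 h2
      by_cases hμ : μ = -1/2
      · exact Or.inr hμ
      · left
        have hμ' : μ + 1/2 ≠ 0 := fun h => hμ (by linarith)
        have e01 : v 0 = v 1 := by
          have h : (μ + 1/2) * (v 0 - v 1) = 0 := by ring_nf; ring_nf at h0 h1; linarith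
          rcases mul_eq_zero.mp h with h | h
          · exact absurd h hμ'
          · linarith
        have e12 : v 1 = v 2 := by
          have h : (μ + 1/2) * (v 1 - v 2) = 0 := by ring_nf; ring_nf at h1 h2; linarith
          rcases mul_eq_zero.mp h with h | h
          · exact absurd h hμ'
          · linarith
        have hv0' : v 0 ≠ 0 := by
          intro h
          apply hv0
          funext k
          fin_cases k
          · show v 0 = 0; exact h
          · show v 1 = 0; rw [← e01]; exact h
          · show v 2 = 0; rw [← e12, ← e01]; exact h
        have hz : μ * v 0 = 0 := by
          rw [e01, e12] at h0
          rw [e01, e12]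
          linarith
        rcases mul_eq_zero.mp hz with h | h
        · exact h
        · exact absurd h hv0'
    · rintro (rfl | rfl)
      · refine ⟨![1, 1, 1], ?_, ?_⟩
        · intro h; have := congrFun h 0; simp at this
        · funext k
          fin_cases k <;>
            simp [Matrix.mulVec, dotProduct, Fin.sum_univ_three] <;> norm_num
      · refine ⟨![1, -1, 0], ?_, ?_⟩
        · intro h; have := congrFun h 0; simp at this
        · funext k
          fin_cases k <;>
            simp [Matrix.mulVec, dotProduct, Fin.sum_univ_three] <;> norm_num
  · refine ⟨![1, -1, 0], ![1, 0, -1], ?_, ?_, ?_⟩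
    · rw [linearIndependent_fin2]
      constructor
      · intro h; have := congrFun h 0; simp at this
      · intro a h
        have h0 := congrFun h 0
        have h1 := congrFun h 1
        simp at h0 h1
    · funext k
      fin_cases k <;>
        simp [Matrix.mulVec, dotProduct, Fin.sum_univ_three] <;> norm_num
    · funext k
      fin_cases k <;>
        simp [Matrix.mulVec, dotProduct, Fin.sum_univ_three] <;> norm_num
  · rw [Matrix.posSemidef_iff_dotProduct_mulVec]
    constructor
    · ext i j
      fin_cases i <;> fin_cases j <;>
        simp [Matrix.conjTranspose_apply, Matrix.cons_val_succ, Matrix.vecHead, Matrix.vecTail]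
    · intro x
      simp only [star_trivial]
      simp [Matrix.mulVec, dotProduct, Fin.sum_univ_three, Matrix.neg_apply, Matrix.cons_val_succ, Matrix.vecHead, Matrix.vecTail]
      nlinarith [sq_nonneg (x 0 - x 1), sq_nonneg (x 0 - x 2), sq_nonneg (x 1 - x 2)]
  · intro v
    constructor
    · intro hv
      have h0 := congrFun hv 0
      have h1 := congrFun hv 1
      have h2 := congrFun hv 2
      simp [Matrix.mulVec, dotProduct, Fin.sum_univ_three] at h0 h1 h2
      refine ⟨v 0, ?_⟩
      funext k
      fin_cases k
      · show v 0 = v 0 * _; simp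
      · show v 1 = v 0 * _; simp; linarith
      · show v 2 = v 0 * _; simp; linarith
    · rintro ⟨c, rfl⟩
      funext k
      fin_cases k <;>
        simp [Matrix.mulVec, dotProduct, Fin.sum_univ_three] <;> ring
end

section
/- Let N = 4 and θ = (0, π/2, π, 3π/2) (the regular 4-gon). Then θ is a critical point of V, and the Hessian of V at θ has eigenvalues 0, 2, −1/2, −1/2 (with −1/2 of multiplicity two); in particular the Hessian has both a positive and a negative eigenvalue, so the 4-gon is a nondegenerate saddle point of V. -/
open Real Finset Matrix

noncomputable def gfun (x : ℝ) : ℝ := Real.cos x + (1/2) * Real.log (2 - 2 * Real.cos x)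
noncomputable def g1 (x : ℝ) : ℝ := -Real.sin x + Real.sin x / (2 - 2 * Real.cos x)
noncomputable def g2 (x : ℝ) : ℝ := -Real.cos x - 1 / (2 - 2 * Real.cos x)

lemma denom_pos {x : ℝ} (hx : Real.cos x ≠ 1) : 0 < 2 - 2 * Real.cos x := by
  have := Real.cos_le_one x
  rcases lt_or_eq_of_le this with h | h
  · linarith
  · exact absurd h hx

lemma hasDerivAt_gfun {x : ℝ} (hx : Real.cos x ≠ 1) : HasDerivAt gfun (g1 x) x := by
  have hd := denom_pos hx
  have h1 : HasDerivAt (fun y : ℝ => 2 - 2 * Real.cos y) (2 * Real.sin x) x := by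
    simpa using ((Real.hasDerivAt_cos x).const_mul 2).const_sub 2
  have h2 : HasDerivAt (fun y : ℝ => Real.log (2 - 2 * Real.cos y))
      ((2 * Real.sin x) / (2 - 2 * Real.cos x)) x := by
    simpa [div_eq_mul_inv, mul_comm, Function.comp_def] using (Real.hasDerivAt_log hd.ne').comp x h1
  have h3 := (Real.hasDerivAt_cos x).add (h2.const_mul (1/2))
  refine h3.congr_deriv ?_
  unfold g1; field_simp

lemma hasDerivAt_g1 {x : ℝ} (hx : Real.cos x ≠ 1) : HasDerivAt g1 (g2 x) x := by
  have hd := denom_pos hx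
  have h1 : HasDerivAt (fun y : ℝ => 2 - 2 * Real.cos y) (2 * Real.sin x) x := by
    simpa using ((Real.hasDerivAt_cos x).const_mul 2).const_sub 2
  have h2 : HasDerivAt (fun y : ℝ => Real.sin y / (2 - 2 * Real.cos y))
      ((Real.cos x * (2 - 2 * Real.cos x) - Real.sin x * (2 * Real.sin x)) / (2 - 2 * Real.cos x)^2) x :=
    (Real.hasDerivAt_sin x).div h1 hd.ne'
  have := ((Real.hasDerivAt_sin x).neg).add h2
  refine this.congr_deriv ?_
  unfold g2
  have hs : Real.sin x ^ 2 = 1 - Real.cos x ^ 2 := by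
    have := Real.sin_sq_add_cos_sq x; nlinarith
  field_simp
  nlinarith [sq_nonneg (2 - 2*Real.cos x)]



lemma V_eq : vortexPotential 4 = fun θ : Fin 4 → ℝ =>
    -(gfun (θ 0 - θ 1) + gfun (θ 0 - θ 2) + gfun (θ 0 - θ 3) +
      gfun (θ 1 - θ 2) + gfun (θ 1 - θ 3) + gfun (θ 2 - θ 3)) := by
  funext θ
  unfold vortexPotential gfun
  rw [Fin.sum_univ_four]
  simp only [Fin.sum_univ_four]
  norm_num [Fin.lt_def, show ((3:Fin 4):ℕ) = 3 from rfl]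
  ring

noncomputable def Lp (i j : Fin 4) : (Fin 4 → ℝ) →L[ℝ] ℝ :=
  (ContinuousLinearMap.proj i : (Fin 4 → ℝ) →L[ℝ] ℝ) -
  (ContinuousLinearMap.proj j : (Fin 4 → ℝ) →L[ℝ] ℝ)

lemma Lp_apply (i j : Fin 4) (v : Fin 4 → ℝ) : Lp i j v = v i - v j := rfl

lemma hasFDerivAt_sub_coord (i j : Fin 4) (θ : Fin 4 → ℝ) :
    HasFDerivAt (fun θ : Fin 4 → ℝ => θ i - θ j) (Lp i j) θ :=
  ((ContinuousLinearMap.proj i : (Fin 4 → ℝ) →L[ℝ] ℝ).hasFDerivAt.sub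
    (ContinuousLinearMap.proj j : (Fin 4 → ℝ) →L[ℝ] ℝ).hasFDerivAt)

lemma hasFDerivAt_pair (i j : Fin 4) {θ : Fin 4 → ℝ} (h : Real.cos (θ i - θ j) ≠ 1) :
    HasFDerivAt (fun θ : Fin 4 → ℝ => gfun (θ i - θ j)) (g1 (θ i - θ j) • Lp i j) θ :=
  (hasDerivAt_gfun h).comp_hasFDerivAt (h₂ := gfun) θ (hasFDerivAt_sub_coord i j θ)

noncomputable def Dmap (θ : Fin 4 → ℝ) : (Fin 4 → ℝ) →L[ℝ] ℝ :=
  -(g1 (θ 0 - θ 1) • Lp 0 1 + g1 (θ 0 - θ 2) • Lp 0 2 + g1 (θ 0 - θ 3) • Lp 0 3 +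
    g1 (θ 1 - θ 2) • Lp 1 2 + g1 (θ 1 - θ 3) • Lp 1 3 + g1 (θ 2 - θ 3) • Lp 2 3)

def Uset : Set (Fin 4 → ℝ) :=
  {θ | Real.cos (θ 0 - θ 1) ≠ 1 ∧ Real.cos (θ 0 - θ 2) ≠ 1 ∧ Real.cos (θ 0 - θ 3) ≠ 1 ∧
       Real.cos (θ 1 - θ 2) ≠ 1 ∧ Real.cos (θ 1 - θ 3) ≠ 1 ∧ Real.cos (θ 2 - θ 3) ≠ 1}

lemma isOpen_Uset : IsOpen Uset := by
  have h : ∀ i j : Fin 4, IsOpen {θ : Fin 4 → ℝ | Real.cos (θ i - θ j) ≠ 1} := by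
    intro i j
    have : Continuous (fun θ : Fin 4 → ℝ => Real.cos (θ i - θ j)) := by continuity
    exact isOpen_compl_singleton.preimage this
  have : Uset = ({θ : Fin 4 → ℝ | Real.cos (θ 0 - θ 1) ≠ 1} ∩ {θ | Real.cos (θ 0 - θ 2) ≠ 1} ∩
      {θ | Real.cos (θ 0 - θ 3) ≠ 1} ∩ {θ | Real.cos (θ 1 - θ 2) ≠ 1} ∩
      {θ | Real.cos (θ 1 - θ 3) ≠ 1} ∩ {θ | Real.cos (θ 2 - θ 3) ≠ 1}) := by
    ext θ; simp [Uset, Set.mem_setOf_eq, and_assoc]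
  rw [this]
  exact (((((h 0 1).inter (h 0 2)).inter (h 0 3)).inter (h 1 2)).inter (h 1 3)).inter (h 2 3)

lemma hasFDerivAt_V {θ : Fin 4 → ℝ} (h : θ ∈ Uset) :
    HasFDerivAt (vortexPotential 4) (Dmap θ) θ := by
  obtain ⟨h01, h02, h03, h12, h13, h23⟩ := h
  rw [V_eq]
  exact (((((hasFDerivAt_pair 0 1 h01).add (hasFDerivAt_pair 0 2 h02)).add
    (hasFDerivAt_pair 0 3 h03)).add (hasFDerivAt_pair 1 2 h12)).add
    (hasFDerivAt_pair 1 3 h13)).add (hasFDerivAt_pair 2 3 h23) |>.neg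



noncomputable def Pt : Fin 4 → ℝ := ![0, π / 2, π, 3 * π / 2]

lemma Pt0 : Pt 0 = 0 := rfl
lemma Pt1 : Pt 1 = π / 2 := rfl
lemma Pt2 : Pt 2 = π := rfl
lemma Pt3 : Pt 3 = 3 * π / 2 := rfl

lemma cos_d1 : Real.cos ((0:ℝ) - π / 2) = 0 := by
  rw [show (0:ℝ) - π/2 = -(π/2) by ring, Real.cos_neg, Real.cos_pi_div_two]
lemma sin_d1 : Real.sin ((0:ℝ) - π / 2) = -1 := by
  rw [show (0:ℝ) - π/2 = -(π/2) by ring, Real.sin_neg, Real.sin_pi_div_two]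
lemma cos_d2 : Real.cos ((0:ℝ) - π) = -1 := by
  rw [show (0:ℝ) - π = -π by ring, Real.cos_neg, Real.cos_pi]
lemma sin_d2 : Real.sin ((0:ℝ) - π) = 0 := by
  rw [show (0:ℝ) - π = -π by ring, Real.sin_neg, Real.sin_pi]; ring
lemma cos_d3 : Real.cos ((0:ℝ) - 3 * π / 2) = 0 := by
  rw [show (0:ℝ) - 3*π/2 = -(π + π/2) by ring, Real.cos_neg, Real.cos_add]
  simp
lemma sin_d3 : Real.sin ((0:ℝ) - 3 * π / 2) = 1 := by
  rw [show (0:ℝ) - 3*π/2 = -(π + π/2) by ring, Real.sin_neg, Real.sin_add]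
  simp
lemma cos_d4 : Real.cos (π / 2 - π) = 0 := by
  rw [show π/2 - π = -(π/2) by ring, Real.cos_neg, Real.cos_pi_div_two]
lemma sin_d4 : Real.sin (π / 2 - π) = -1 := by
  rw [show π/2 - π = -(π/2) by ring, Real.sin_neg, Real.sin_pi_div_two]
lemma cos_d5 : Real.cos (π / 2 - 3 * π / 2) = -1 := by
  rw [show π/2 - 3*π/2 = -π by ring, Real.cos_neg, Real.cos_pi]
lemma sin_d5 : Real.sin (π / 2 - 3 * π / 2) = 0 := by
  rw [show π/2 - 3*π/2 = -π by ring, Real.sin_neg, Real.sin_pi]; ring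
lemma cos_d6 : Real.cos (π - 3 * π / 2) = 0 := by
  rw [show π - 3*π/2 = -(π/2) by ring, Real.cos_neg, Real.cos_pi_div_two]
lemma sin_d6 : Real.sin (π - 3 * π / 2) = -1 := by
  rw [show π - 3*π/2 = -(π/2) by ring, Real.sin_neg, Real.sin_pi_div_two]

lemma g1_d1 : g1 ((0:ℝ) - π / 2) = 1/2 := by unfold g1; rw [cos_d1, sin_d1]; norm_num
lemma g1_d2 : g1 ((0:ℝ) - π) = 0 := by unfold g1; rw [cos_d2, sin_d2]; norm_num
lemma g1_d3 : g1 ((0:ℝ) - 3 * π / 2) = -(1/2) := by unfold g1; rw [cos_d3, sin_d3]; norm_num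
lemma g1_d4 : g1 (π / 2 - π) = 1/2 := by unfold g1; rw [cos_d4, sin_d4]; norm_num
lemma g1_d5 : g1 (π / 2 - 3 * π / 2) = 0 := by unfold g1; rw [cos_d5, sin_d5]; norm_num
lemma g1_d6 : g1 (π - 3 * π / 2) = 1/2 := by unfold g1; rw [cos_d6, sin_d6]; norm_num

lemma g2_d1 : g2 ((0:ℝ) - π / 2) = -(1/2) := by unfold g2; rw [cos_d1]; norm_num
lemma g2_d2 : g2 ((0:ℝ) - π) = 3/4 := by unfold g2; rw [cos_d2]; norm_num
lemma g2_d3 : g2 ((0:ℝ) - 3 * π / 2) = -(1/2) := by unfold g2; rw [cos_d3]; norm_num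
lemma g2_d4 : g2 (π / 2 - π) = -(1/2) := by unfold g2; rw [cos_d4]; norm_num
lemma g2_d5 : g2 (π / 2 - 3 * π / 2) = 3/4 := by unfold g2; rw [cos_d5]; norm_num
lemma g2_d6 : g2 (π - 3 * π / 2) = -(1/2) := by unfold g2; rw [cos_d6]; norm_num

lemma Pt_mem : Pt ∈ Uset := by
  refine ⟨?_, ?_, ?_, ?_, ?_, ?_⟩ <;>
    simp only [Pt0, Pt1, Pt2, Pt3, cos_d1, cos_d2, cos_d3, cos_d4, cos_d5, cos_d6] <;> norm_num

lemma fderiv_V_Pt : fderiv ℝ (vortexPotential 4) Pt = Dmap Pt :=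
  (hasFDerivAt_V Pt_mem).fderiv

lemma grad_zero (j : Fin 4) : fderiv ℝ (vortexPotential 4) Pt (Pi.single j 1) = 0 := by
  rw [fderiv_V_Pt]
  unfold Dmap
  simp only [ContinuousLinearMap.neg_apply, ContinuousLinearMap.add_apply,
    ContinuousLinearMap.smul_apply, Lp_apply, Pt0, Pt1, Pt2, Pt3,
    g1_d1, g1_d2, g1_d3, g1_d4, g1_d5, g1_d6, smul_eq_mul]
  fin_cases j <;> simp [Pi.single_apply]

noncomputable def Emap : (Fin 4 → ℝ) →L[ℝ] ((Fin 4 → ℝ) →L[ℝ] ℝ) :=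
  -((g2 (Pt 0 - Pt 1) • Lp 0 1).smulRight (Lp 0 1) +
    (g2 (Pt 0 - Pt 2) • Lp 0 2).smulRight (Lp 0 2) +
    (g2 (Pt 0 - Pt 3) • Lp 0 3).smulRight (Lp 0 3) +
    (g2 (Pt 1 - Pt 2) • Lp 1 2).smulRight (Lp 1 2) +
    (g2 (Pt 1 - Pt 3) • Lp 1 3).smulRight (Lp 1 3) +
    (g2 (Pt 2 - Pt 3) • Lp 2 3).smulRight (Lp 2 3))

lemma hasFDerivAt_pairD (i j : Fin 4) {θ : Fin 4 → ℝ} (h : Real.cos (θ i - θ j) ≠ 1) :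
    HasFDerivAt (fun θ : Fin 4 → ℝ => g1 (θ i - θ j) • Lp i j)
      ((g2 (θ i - θ j) • Lp i j).smulRight (Lp i j)) θ := by
  have hc : HasFDerivAt (fun θ : Fin 4 → ℝ => g1 (θ i - θ j)) (g2 (θ i - θ j) • Lp i j) θ :=
    (hasDerivAt_g1 h).comp_hasFDerivAt (h₂ := g1) θ (hasFDerivAt_sub_coord i j θ)
  exact (hc.smul (hasFDerivAt_const (Lp i j) θ)).congr_fderiv (by simp)

lemma hasFDerivAt_Dmap : HasFDerivAt Dmap Emap Pt := by
  obtain ⟨h01, h02, h03, h12, h13, h23⟩ := Pt_mem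
  exact ((((((hasFDerivAt_pairD 0 1 h01).add (hasFDerivAt_pairD 0 2 h02)).add
    (hasFDerivAt_pairD 0 3 h03)).add (hasFDerivAt_pairD 1 2 h12)).add
    (hasFDerivAt_pairD 1 3 h13)).add (hasFDerivAt_pairD 2 3 h23)).neg

lemma fderiv2_V_Pt : fderiv ℝ (fderiv ℝ (vortexPotential 4)) Pt = Emap := by
  have heq : fderiv ℝ (vortexPotential 4) =ᶠ[nhds Pt] Dmap := by
    filter_upwards [isOpen_Uset.mem_nhds Pt_mem] with θ hθ using (hasFDerivAt_V hθ).fderiv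
  rw [heq.fderiv_eq]
  exact hasFDerivAt_Dmap.fderiv


noncomputable def Hmat : Matrix (Fin 4) (Fin 4) ℝ :=
  !![1/4, -1/2, 3/4, -1/2; -1/2, 1/4, -1/2, 3/4; 3/4, -1/2, 1/4, -1/2; -1/2, 3/4, -1/2, 1/4]

lemma hessian_eq_s19 : vortexHessian 4 Pt = Hmat := by
  funext i j
  unfold vortexHessian
  rw [iteratedFDeriv_two_apply]
  simp only [Matrix.cons_val_zero, Matrix.cons_val_one, Matrix.head_cons]
  rw [fderiv2_V_Pt]
  unfold Emap
  simp only [ContinuousLinearMap.neg_apply, ContinuousLinearMap.add_apply,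
    ContinuousLinearMap.smulRight_apply, ContinuousLinearMap.smul_apply, Lp_apply,
    Pt0, Pt1, Pt2, Pt3, g2_d1, g2_d2, g2_d3, g2_d4, g2_d5, g2_d6, smul_eq_mul]
  fin_cases i <;> fin_cases j <;>
    simp [Pi.single_apply, Hmat] <;> norm_num

lemma eig_forward {μ : ℝ} {v : Fin 4 → ℝ} (hne : v ≠ 0) (hv : Hmat.mulVec v = μ • v) :
    μ = 0 ∨ μ = 2 ∨ μ = -1/2 := by
  by_contra hcon
  push_neg at hcon
  obtain ⟨h0, h2, hh⟩ := hcon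
  have e0 := congrFun hv 0
  have e1 := congrFun hv 1
  have e2 := congrFun hv 2
  have e3 := congrFun hv 3
  simp only [Hmat, Matrix.mulVec, dotProduct, Fin.sum_univ_four, Pi.smul_apply, smul_eq_mul,
    Matrix.cons_val', Matrix.cons_val_zero, Matrix.cons_val_one, Matrix.head_cons,
    Matrix.empty_val', Matrix.cons_val_fin_one, Matrix.head_fin_const, Matrix.of_apply,
    Matrix.cons_val_two, Matrix.tail_cons, Matrix.cons_val_three] at e0 e1 e2 e3
  have ha : μ * (v 0 + v 1 + v 2 + v 3) = 0 := by linear_combination -(e0 + e1 + e2 + e3)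
  have hb : (μ - 2) * (v 0 - v 1 + v 2 - v 3) = 0 := by linear_combination e1 - e0 + e3 - e2
  have hc : (μ + 1/2) * (v 0 - v 2) = 0 := by linear_combination e2 - e0
  have hd : (μ + 1/2) * (v 1 - v 3) = 0 := by linear_combination e3 - e1
  have hh' : μ + 1/2 ≠ 0 := fun h => hh (by linarith)
  have h2' : μ - 2 ≠ 0 := fun h => h2 (by linarith)
  have ha' : v 0 + v 1 + v 2 + v 3 = 0 := (mul_eq_zero.mp ha).resolve_left h0
  have hb' : v 0 - v 1 + v 2 - v 3 = 0 := (mul_eq_zero.mp hb).resolve_left h2'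
  have hc' : v 0 - v 2 = 0 := (mul_eq_zero.mp hc).resolve_left hh'
  have hd' : v 1 - v 3 = 0 := (mul_eq_zero.mp hd).resolve_left hh'
  apply hne
  funext k
  fin_cases k <;> simp <;> linarith

lemma mulVec_ones : Hmat.mulVec ![1,1,1,1] = (0:ℝ) • ![1,1,1,1] := by
  funext k
  fin_cases k <;>
    simp [Hmat, Matrix.mulVec, dotProduct, Fin.sum_univ_four] <;> norm_num

lemma mulVec_alt : Hmat.mulVec ![1,-1,1,-1] = (2:ℝ) • ![1,-1,1,-1] := by
  funext k
  fin_cases k <;>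
    simp [Hmat, Matrix.mulVec, dotProduct, Fin.sum_univ_four] <;> norm_num

lemma mulVec_c : Hmat.mulVec ![1,0,-1,0] = (-1/2:ℝ) • ![1,0,-1,0] := by
  funext k
  fin_cases k <;>
    simp [Hmat, Matrix.mulVec, dotProduct, Fin.sum_univ_four] <;> norm_num

lemma mulVec_d : Hmat.mulVec ![0,1,0,-1] = (-1/2:ℝ) • ![0,1,0,-1] := by
  funext k
  fin_cases k <;>
    simp [Hmat, Matrix.mulVec, dotProduct, Fin.sum_univ_four] <;> norm_num

lemma ones_ne : (![1,1,1,1] : Fin 4 → ℝ) ≠ 0 := by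
  intro h; have := congrFun h 0; norm_num at this

lemma alt_ne : (![1,-1,1,-1] : Fin 4 → ℝ) ≠ 0 := by
  intro h; have := congrFun h 0; norm_num at this

lemma c_ne : (![1,0,-1,0] : Fin 4 → ℝ) ≠ 0 := by
  intro h; have := congrFun h 0; norm_num at this

lemma cd_li : LinearIndependent ℝ ![(![1,0,-1,0] : Fin 4 → ℝ), ![0,1,0,-1]] := by
  rw [linearIndependent_fin2]
  constructor
  · intro h; have := congrFun h 1; norm_num at this
  · intro a h
    have h0 := congrFun h 0
    norm_num at h0


/-- For `N = 4` and the regular 4-gon `θ = (0, π/2, π, 3π/2)`, `θ` is a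
critical point of `V`, and the Hessian of `V` at `θ` has eigenvalues `0, 2, -1/2` with
`-1/2` of multiplicity two; in particular the Hessian has both a strictly positive and a
strictly negative eigenvalue, so the 4-gon is a nondegenerate saddle point of `V`. -/
theorem four_gon_saddle :
    (∀ j : Fin 4,
      fderiv ℝ (vortexPotential 4) ![0, π / 2, π, 3 * π / 2] (Pi.single j 1) = 0) ∧
    (∀ μ : ℝ, (∃ v : Fin 4 → ℝ, v ≠ 0 ∧
        (vortexHessian 4 ![0, π / 2, π, 3 * π / 2]).mulVec v = μ • v) ↔
      (μ = 0 ∨ μ = 2 ∨ μ = -1/2)) ∧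
    (∃ v w : Fin 4 → ℝ, LinearIndependent ℝ ![v, w] ∧
      (vortexHessian 4 ![0, π / 2, π, 3 * π / 2]).mulVec v = (-1/2 : ℝ) • v ∧
      (vortexHessian 4 ![0, π / 2, π, 3 * π / 2]).mulVec w = (-1/2 : ℝ) • w) ∧
    (∃ μ : ℝ, 0 < μ ∧ ∃ v : Fin 4 → ℝ, v ≠ 0 ∧
      (vortexHessian 4 ![0, π / 2, π, 3 * π / 2]).mulVec v = μ • v) ∧
    (∃ μ : ℝ, μ < 0 ∧ ∃ v : Fin 4 → ℝ, v ≠ 0 ∧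
      (vortexHessian 4 ![0, π / 2, π, 3 * π / 2]).mulVec v = μ • v) := by
  have hPt : (![0, π / 2, π, 3 * π / 2] : Fin 4 → ℝ) = Pt := rfl
  rw [hPt, hessian_eq_s19]
  refine ⟨grad_zero, ?_, ?_, ?_, ?_⟩
  · intro μ
    constructor
    · rintro ⟨v, hne, hv⟩
      exact eig_forward hne hv
    · rintro (rfl | rfl | rfl)
      · exact ⟨![1,1,1,1], ones_ne, mulVec_ones⟩
      · exact ⟨![1,-1,1,-1], alt_ne, mulVec_alt⟩
      · exact ⟨![1,0,-1,0], c_ne, mulVec_c⟩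
  · exact ⟨![1,0,-1,0], ![0,1,0,-1], cd_li, mulVec_c, mulVec_d⟩
  · exact ⟨2, by norm_num, ![1,-1,1,-1], alt_ne, mulVec_alt⟩
  · exact ⟨-1/2, by norm_num, ![1,0,-1,0], c_ne, mulVec_c⟩
end
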